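/- Let C_n be the cycle graph on n ≥ 3 vertices. Every divisor D on C_n of degree 1 is linearly equivalent to the indicator divisor of a single vertex; that is, there exist a vertex v and f : V → ℤ such that D − L f takes the value 1 at v and 0 at every other vertex. Consequently, every divisor of degree ≥ 1 on C_n is linearly equivalent to an effective divisor. -/

import Mathlib

open Finset

/-- The degree of a vertex of a simple graph: the number of its neighbors. -/
noncomputable def degS {V : Type*} (G : SimpleGraph V) (v : V) : ℕ :=
  {u | G.Adj v u}.ncard

open Classical in
/-- The Laplacian matrix of a simple graph `G`:
`L v v = deg v`, `L v w = -1` if `v w` is an edge, and `0` otherwise. -/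
noncomputable def lapS {V : Type*} (G : SimpleGraph V) (v w : V) : ℤ :=
  if v = w then (degS G v : ℤ) else if G.Adj v w then -1 else 0

/-- The Laplacian applied to a firing function `f`, evaluated at `v`. -/
noncomputable def lapApplyS {V : Type*} [Fintype V] (G : SimpleGraph V)
    (f : V → ℤ) (v : V) : ℤ :=
  ∑ w, lapS G v w * f w

/-- A divisor is winnable if it is linearly equivalent to an effective divisor. -/
def WinnableS {V : Type*} [Fintype V] (G : SimpleGraph V) (D : V → ℤ) : Prop :=
  ∃ f : V → ℤ, ∀ v, 0 ≤ D v - lapApplyS G f v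

/-- The Baker–Norine rank of a divisor on a simple graph. -/
noncomputable def rankS {V : Type*} [Fintype V] (G : SimpleGraph V) (D : V → ℤ) : ℤ :=
  sSup {r : ℤ | ∀ E : V → ℤ, (∀ v, 0 ≤ E v) → (∑ v, E v) = r →
    WinnableS G (fun v => D v - E v)}

lemma sumP (e : ℕ → ℤ) (m : ℕ) :
    ∑ i ∈ Finset.range m, (∑ j ∈ Finset.range (i+1), e j)
      = ∑ j ∈ Finset.range m, ((m : ℤ) - j) * e j := by
  induction m with
  | zero => simp
  | succ m ih =>
      rw [Finset.sum_range_succ _ m, ih]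
      have h : ∀ j ∈ Finset.range (m+1), (((m+1 : ℕ) : ℤ) - j) * e j = ((m:ℤ) - j) * e j + e j := by
        intro j _; push_cast; ring
      rw [Finset.sum_congr rfl h, Finset.sum_add_distrib,
        Finset.sum_range_succ (fun j => ((m:ℤ) - (j:ℤ)) * e j) m]
      ring

lemma exists_firing {k : ℕ} (E : Fin (k+1) → ℤ)
    (h0 : ∑ v, E v = 0) (h1 : ((k:ℤ)+1) ∣ ∑ v, (v.val : ℤ) * E v) :
    ∃ f : Fin (k+1) → ℤ, ∀ v : Fin (k+1), 2 * f v - f (v - 1) - f (v + 1) = E v := by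
  set e : ℕ → ℤ := fun j => if h : j < k + 1 then E ⟨j, h⟩ else 0 with he
  set P : ℕ → ℤ := fun i => ∑ j ∈ Finset.range i, e j with hP
  have hsum_e : ∀ i : ℕ, (h : i < k + 1) → e i = E ⟨i, h⟩ := by
    intro i h; rw [he]; exact dif_pos h
  have hPn : P (k+1) = 0 := by
    rw [hP]
    simp only
    rw [← Fin.sum_univ_eq_sum_range e (k+1), ← h0]
    refine Finset.sum_congr rfl fun v _ => ?_
    simp [he, v.isLt, Nat.not_lt.mpr (Nat.lt_succ_iff.mp v.isLt)]
  -- T := ∑ i in range (k+1), P (i+1)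
  have hT : ∑ i ∈ Finset.range (k+1), P (i+1)
      = ((k:ℤ)+1) * (∑ v, E v) - ∑ v : Fin (k+1), (v.val : ℤ) * E v := by
    have := sumP e (k+1)
    rw [hP]
    simp only
    rw [this]
    have e1 : ∑ j ∈ Finset.range (k+1), (((k+1:ℕ):ℤ) - j) * e j
        = ((k:ℤ)+1) * (∑ j ∈ Finset.range (k+1), e j) - ∑ j ∈ Finset.range (k+1), (j:ℤ) * e j := by
      rw [Finset.mul_sum, ← Finset.sum_sub_distrib]
      refine Finset.sum_congr rfl fun j _ => ?_
      push_cast; ring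
    rw [e1, ← Fin.sum_univ_eq_sum_range e (k+1),
      ← Fin.sum_univ_eq_sum_range (fun j => (j:ℤ) * e j) (k+1)]
    congr 1
    · congr 1
      refine Finset.sum_congr rfl fun v _ => ?_
      simp [he, v.isLt, Nat.not_lt.mpr (Nat.lt_succ_iff.mp v.isLt)]
    · refine Finset.sum_congr rfl fun v _ => ?_
      simp [he, v.isLt, Nat.not_lt.mpr (Nat.lt_succ_iff.mp v.isLt)]
  have hdvd : ((k:ℤ)+1) ∣ ∑ i ∈ Finset.range (k+1), P (i+1) := by
    rw [hT, h0, mul_zero, zero_sub]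
    exact dvd_neg.mpr h1
  obtain ⟨c, hc⟩ := hdvd
  set h : ℕ → ℤ := fun i => P (i+1) - c with hh
  have hhsum : ∑ i ∈ Finset.range (k+1), h i = 0 := by
    simp only [hh, Finset.sum_sub_distrib, Finset.sum_const, Finset.card_range, hc,
      nsmul_eq_mul]
    push_cast
    ring
  set f0 : ℕ → ℤ := fun a => -∑ i ∈ Finset.range a, h i with hf0
  have hlastval : f0 k = h k := by
    have : ∑ i ∈ Finset.range (k+1), h i = (∑ i ∈ Finset.range k, h i) + h k :=
      Finset.sum_range_succ h k
    rw [hf0]; simp only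
    rw [hhsum] at this
    linarith
  have claimA : ∀ v : Fin (k+1), f0 v.val - f0 ((v+1).val) = h v.val := by
    intro v
    rw [Fin.val_add_one]
    by_cases hv : v = Fin.last k
    · rw [if_pos hv, hv]
      simp only [Fin.val_last, Fin.val_zero]
      rw [hlastval]
      simp [hf0]
    · rw [if_neg hv]
      simp only [hf0, Finset.sum_range_succ]
      ring
  have claimC : ∀ v : Fin (k+1), h v.val - h ((v-1).val) = E v := by
    intro v
    rw [Fin.coe_sub_one]
    by_cases hv : v = 0
    · rw [if_pos hv, hv]
      simp only [Fin.val_zero, hh]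
      rw [hPn]
      have : P 1 = e 0 := by simp [hP]
      rw [this, hsum_e 0 (by omega)]
      have h00 : (⟨0, by omega⟩ : Fin (k+1)) = 0 := rfl
      rw [h00]
      ring
    · rw [if_neg hv]
      have hvpos : 0 < v.val := Nat.pos_of_ne_zero (fun h => hv (Fin.ext (by simp [h])))
      have hstep : v.val - 1 + 1 = v.val := Nat.succ_pred_eq_of_pos hvpos
      simp only [hh]
      rw [hstep]
      have hsucc : P (v.val + 1) = P v.val + e v.val := by simp [hP, Finset.sum_range_succ]
      rw [hsucc, hsum_e v.val v.isLt, Fin.eta]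
      ring
  refine ⟨fun v => f0 v.val, fun v => ?_⟩
  have hA1 := claimA v
  have hA2 := claimA (v - 1)
  rw [sub_add_cancel] at hA2
  have hC := claimC v
  linarith

lemma lap_cycle (m : ℕ) (f : Fin (m+3) → ℤ) (v : Fin (m+3)) :
    lapApplyS (SimpleGraph.cycleGraph (m+3)) f v = 2 * f v - f (v - 1) - f (v + 1) := by
  have h1 : (1 : Fin (m+3)) ≠ 0 := by simp [Fin.ext_iff]
  have h2 : (2 : Fin (m+3)) ≠ 0 := by simp [Fin.ext_iff, Nat.mod_eq_of_lt (show 2 < m+3 by omega)]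
  have hA : v + 1 ≠ v := by
    intro h
    exact h1 (add_left_cancel (h.trans (add_zero v).symm))
  have hB : v - 1 ≠ v := fun h => h1 (sub_eq_self.mp h)
  have hC : v - 1 ≠ v + 1 := by
    intro h
    apply h2
    have : v + 1 - (v - 1) = 0 := by rw [← h]; open Fin.CommRing in ring
    calc (2 : Fin (m+3)) = v + 1 - (v - 1) := by open Fin.CommRing in ring
    _ = 0 := this
  have hne : (SimpleGraph.cycleGraph (m+3)).neighborSet v = {v - 1, v + 1} :=
    SimpleGraph.cycleGraph_neighborSet (n := m + 1)
  have hdeg : degS (SimpleGraph.cycleGraph (m+3)) v = 2 := by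
    unfold degS
    rw [show {u | (SimpleGraph.cycleGraph (m+3)).Adj v u} = (SimpleGraph.cycleGraph (m+3)).neighborSet v from rfl, hne, Set.ncard_pair hC]
  have hadj : ∀ w, (SimpleGraph.cycleGraph (m+3)).Adj v w ↔ (w = v - 1 ∨ w = v + 1) := by
    intro w
    rw [← SimpleGraph.mem_neighborSet, hne]
    simp
  have key : ∀ w, lapS (SimpleGraph.cycleGraph (m+3)) v w * f w =
      (if w = v then 2 * f w else 0) - (if w = v - 1 then f w else 0)
        - (if w = v + 1 then f w else 0) := by
    intro w
    unfold lapS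
    rcases eq_or_ne w v with rfl | hvw
    · rw [if_pos rfl, if_pos rfl, if_neg (Ne.symm hB), if_neg (Ne.symm hA), hdeg]; ring
    · rw [if_neg (Ne.symm hvw), if_neg hvw]
      rcases eq_or_ne w (v - 1) with rfl | hw1
      · rw [if_pos ((hadj _).mpr (Or.inl rfl)), if_pos rfl, if_neg hC]; ring
      · rcases eq_or_ne w (v + 1) with rfl | hw2
        · rw [if_pos ((hadj _).mpr (Or.inr rfl)), if_neg hw1, if_pos rfl]; ring
        · rw [if_neg (fun h => by rcases (hadj w).mp h with h | h <;> [exact hw1 h; exact hw2 h]), if_neg hw1, if_neg hw2]; ring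
  unfold lapApplyS
  rw [Finset.sum_congr rfl (fun w _ => key w)]
  simp only [Finset.sum_sub_distrib, Finset.sum_ite_eq', Finset.mem_univ, if_pos]

/-- On the cycle graph `C n` (`n ≥ 3`), every divisor of degree `1` is linearly
equivalent to the indicator divisor of a single vertex; consequently every divisor of
degree at least `1` is linearly equivalent to an effective divisor. -/
theorem cycle_degree_one_equiv_vertex (n : ℕ) (hn : 3 ≤ n) :
    (∀ D : Fin n → ℤ, (∑ v, D v) = 1 →
      ∃ (v : Fin n) (f : Fin n → ℤ), ∀ w,
        D w - lapApplyS (SimpleGraph.cycleGraph n) f w = if w = v then 1 else 0) ∧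
    (∀ D : Fin n → ℤ, 1 ≤ ∑ v, D v →
      ∃ f : Fin n → ℤ, ∀ w, 0 ≤ D w - lapApplyS (SimpleGraph.cycleGraph n) f w) := by
  obtain ⟨m, rfl⟩ : ∃ m, n = m + 3 := ⟨n - 3, by omega⟩
  have part1 : ∀ D : Fin (m+3) → ℤ, (∑ v, D v) = 1 →
      ∃ (v : Fin (m+3)) (f : Fin (m+3) → ℤ), ∀ w,
        D w - lapApplyS (SimpleGraph.cycleGraph (m+3)) f w = if w = v then 1 else 0 := by
    intro D hD
    set s : ℤ := ∑ w : Fin (m+3), (w.val : ℤ) * D w with hs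
    have hnpos : (0:ℤ) < (m:ℤ)+3 := by positivity
    have hrem0 : 0 ≤ s % ((m:ℤ)+3) := Int.emod_nonneg s (by omega)
    have hrem1 : s % ((m:ℤ)+3) < (m:ℤ)+3 := Int.emod_lt_of_pos s hnpos
    set v0 : Fin (m+3) := ⟨(s % ((m:ℤ)+3)).toNat, by omega⟩ with hv0
    have hval : (v0.val : ℤ) = s % ((m:ℤ)+3) := by
      simp [hv0, Int.toNat_of_nonneg hrem0]
    set E : Fin (m+3) → ℤ := fun w => D w - if w = v0 then 1 else 0 with hE
    have h0 : ∑ w, E w = 0 := by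
      simp only [hE]
      rw [Finset.sum_sub_distrib, hD, Finset.sum_ite_eq' Finset.univ v0 (fun _ => (1:ℤ))]
      simp
    have h1 : (((m+2 : ℕ):ℤ)+1) ∣ ∑ w : Fin (m+2+1), ((w.val:ℤ)) * E w := by
      have hsum : ∑ w : Fin (m+3), (w.val:ℤ) * E w = s - v0.val := by
        simp only [hE, mul_sub, mul_ite, mul_one, mul_zero]
        rw [Finset.sum_sub_distrib, ← hs, Finset.sum_ite_eq' Finset.univ v0 (fun w => ((w:Fin (m+3)).val:ℤ))]
        simp
      refine ⟨s / ((m:ℤ)+3), ?_⟩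
      have : ∑ w : Fin (m+2+1), ((w.val:ℤ)) * E w = s - v0.val := hsum
      rw [this, hval, Int.emod_def]
      push_cast
      ring
    obtain ⟨f, hf⟩ := exists_firing (k := m+2) E h0 h1
    refine ⟨v0, f, fun w => ?_⟩
    rw [lap_cycle m f w]
    have h2 := hf w
    simp only [hE] at h2
    linarith [h2]
  refine ⟨part1, ?_⟩
  intro D hD
  set d : ℤ := ∑ v, D v with hd
  have h1' : ∑ w, (fun w => D w - if w = (0 : Fin (m+3)) then d - 1 else 0) w = 1 := by
    simp only
    rw [Finset.sum_sub_distrib, ← hd,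
      Finset.sum_ite_eq' Finset.univ (0 : Fin (m+3)) (fun _ => d - 1)]
    simp
  obtain ⟨v0, f, hf⟩ := part1 _ h1'
  refine ⟨f, fun w => ?_⟩
  have h2 := hf w
  split_ifs at h2 <;> linarith
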